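/- As t \to 0^+, the quotient \frac{\sum_{m \ge 1} m^{-1/4} e^{2 m^{3/2} - (m+1)^3 t}}{\sum_{m \ge 1} m^{-1/4} e^{2 m^{3/2} - m^3 t}} tends to 0. -/

import Mathlib

open Filter Topology Set


noncomputable def fD (t : ℝ) (m : ℕ) : ℝ :=
  ((m:ℝ) + 1) ^ (-(1/4) : ℝ) * Real.exp (2 * ((m:ℝ) + 1) ^ ((3:ℝ)/2) - ((m:ℝ) + 1) ^ 3 * t)

noncomputable def fN (t : ℝ) (m : ℕ) : ℝ :=
  ((m:ℝ) + 1) ^ (-(1/4) : ℝ) * Real.exp (2 * ((m:ℝ) + 1) ^ ((3:ℝ)/2) - ((m:ℝ) + 2) ^ 3 * t)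

lemma fD_pos (t : ℝ) (m : ℕ) : 0 < fD t m := by
  unfold fD; positivity

lemma fN_pos (t : ℝ) (m : ℕ) : 0 < fN t m := by
  unfold fN; positivity

lemma sqrt_aux (x : ℝ) (hx : 1 ≤ x) :
    x ^ ((3:ℝ)/2) + Real.sqrt x ≤ (x+1) ^ ((3:ℝ)/2) := by
  have hx0 : (0:ℝ) < x := by linarith
  have hx1 : (0:ℝ) < x + 1 := by linarith
  rw [show (3:ℝ)/2 = 1 + 1/2 by norm_num, Real.rpow_add hx0, Real.rpow_add hx1,
    Real.rpow_one, Real.rpow_one, ← Real.sqrt_eq_rpow, ← Real.sqrt_eq_rpow]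
  have h1 : Real.sqrt x ≤ Real.sqrt (x+1) := Real.sqrt_le_sqrt (by linarith)
  have h2 : x * Real.sqrt x + Real.sqrt x = (x+1) * Real.sqrt x := by ring
  rw [h2]
  gcongr

lemma inv4_aux (x : ℝ) (hx : 1 ≤ x) :
    x ^ (-(1/4) : ℝ) ≤ 2 * (x+1) ^ (-(1/4) : ℝ) := by
  have hx0 : (0:ℝ) < x := by linarith
  have hx1 : (0:ℝ) < x + 1 := by linarith
  have key : (x+1) ^ ((1/4:ℝ)) ≤ 2 * x ^ ((1/4:ℝ)) := by
    calc (x+1) ^ ((1/4:ℝ)) ≤ (2*x) ^ ((1/4:ℝ)) := by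
          apply Real.rpow_le_rpow (by linarith) (by linarith) (by norm_num)
      _ = 2 ^ ((1/4:ℝ)) * x ^ ((1/4:ℝ)) := Real.mul_rpow (by norm_num) hx0.le
      _ ≤ 2 * x ^ ((1/4:ℝ)) := by
          have : (2:ℝ) ^ ((1/4:ℝ)) ≤ 2 ^ (1:ℝ) :=
            Real.rpow_le_rpow_of_exponent_le (by norm_num) (by norm_num)
          rw [Real.rpow_one] at this
          have : x ^ ((1/4:ℝ)) ≥ 0 := (Real.rpow_pos_of_pos hx0 _).le
          nlinarith [Real.rpow_pos_of_pos hx0 ((1:ℝ)/4),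
            Real.rpow_le_rpow_of_exponent_le (show (1:ℝ) ≤ 2 by norm_num) (show (1:ℝ)/4 ≤ 1 by norm_num)]
  have ha := Real.rpow_pos_of_pos hx0 ((1:ℝ)/4)
  have hb := Real.rpow_pos_of_pos hx1 ((1:ℝ)/4)
  rw [Real.rpow_neg hx0.le, Real.rpow_neg hx1.le, ← one_div, ← one_div, mul_one_div,
    div_le_div_iff₀ ha hb, one_mul]
  exact key

lemma summable_fD {t : ℝ} (ht : 0 < t) : Summable (fD t) := by
  obtain ⟨k, hk⟩ := exists_nat_ge (3 / t)
  rw [← summable_nat_add_iff k]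
  have hbound : ∀ m : ℕ, fD t (m + k) ≤ (Real.exp (-1)) ^ m := by
    intro m
    set x : ℝ := ((m + k : ℕ) : ℝ) + 1 with hx
    have hx1 : (1:ℝ) ≤ x := by rw [hx]; linarith [Nat.cast_nonneg (α := ℝ) (m + k)]
    have hx0 : (0:ℝ) < x := by linarith
    -- t * x^(3/2) ≥ 3
    have h32 : x ≤ x ^ ((3:ℝ)/2) := by
      nth_rewrite 1 [← Real.rpow_one x]
      exact Real.rpow_le_rpow_of_exponent_le hx1 (by norm_num)
    have hxk : (k:ℝ) + 1 ≤ x := by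
      rw [hx]; push_cast; linarith [Nat.cast_nonneg (α := ℝ) m]
    have ht3 : 3 ≤ t * x ^ ((3:ℝ)/2) := by
      have : 3 / t ≤ x ^ ((3:ℝ)/2) := le_trans (le_trans hk (by linarith)) h32
      rw [div_le_iff₀ ht] at this
      linarith [this]
    -- x^3 = x^(3/2) * x^(3/2)
    have hx3 : (x:ℝ) ^ 3 = x ^ ((3:ℝ)/2) * x ^ ((3:ℝ)/2) := by
      rw [← Real.rpow_add hx0]
      norm_num
    have hexp : 2 * x ^ ((3:ℝ)/2) - x ^ 3 * t ≤ -x := by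
      have h1 : x ^ 3 * t = x ^ ((3:ℝ)/2) * (t * x ^ ((3:ℝ)/2)) := by rw [hx3]; ring
      have h2 : x ^ ((3:ℝ)/2) * 3 ≤ x ^ ((3:ℝ)/2) * (t * x ^ ((3:ℝ)/2)) := by
        apply mul_le_mul_of_nonneg_left ht3 (by positivity)
      nlinarith [h32]
    have hpow : x ^ (-(1/4) : ℝ) ≤ 1 :=
      Real.rpow_le_one_of_one_le_of_nonpos hx1 (by norm_num)
    calc fD t (m + k) = x ^ (-(1/4) : ℝ) * Real.exp (2 * x ^ ((3:ℝ)/2) - x ^ 3 * t) := rfl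
      _ ≤ 1 * Real.exp (-x) := by
          apply mul_le_mul hpow (Real.exp_le_exp.2 hexp) (Real.exp_pos _).le one_pos.le
      _ ≤ (Real.exp (-1)) ^ m := by
          rw [one_mul, ← Real.exp_nat_mul]
          apply Real.exp_le_exp.2
          push_cast [hx]
          nlinarith [Nat.cast_nonneg (α := ℝ) k, Nat.cast_nonneg (α := ℝ) m]
  apply Summable.of_nonneg_of_le (fun m => (fD_pos t _).le) hbound
  exact summable_geometric_of_lt_one (Real.exp_pos _).le (Real.exp_lt_one_iff.2 (by norm_num))

lemma fN_le_fD {t : ℝ} (ht : 0 ≤ t) (m : ℕ) : fN t m ≤ fD t m := by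
  unfold fN fD
  apply mul_le_mul_of_nonneg_left _ (by positivity)
  apply Real.exp_le_exp.2
  have h : ((m:ℝ) + 1) ^ 3 * t ≤ ((m:ℝ) + 2) ^ 3 * t := by
    apply mul_le_mul_of_nonneg_right _ ht
    have : (0:ℝ) ≤ (m:ℝ) := Nat.cast_nonneg m
    nlinarith
  linarith

lemma summable_fN {t : ℝ} (ht : 0 < t) : Summable (fN t) :=
  Summable.of_nonneg_of_le (fun m => (fN_pos t m).le) (fN_le_fD ht.le) (summable_fD ht)

/-- Key shift bound: `fN t m ≤ c m * fD t (m+1)` with `c m = 2 exp(-2√(m+1))`. -/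
lemma fN_key (t : ℝ) (m : ℕ) :
    fN t m ≤ (2 * Real.exp (-2 * Real.sqrt ((m:ℝ) + 1))) * fD t (m + 1) := by
  have hc : (((m + 1 : ℕ)):ℝ) = (m:ℝ) + 1 := by push_cast; ring
  set x : ℝ := (m:ℝ) + 1 with hxdef
  have hx1 : (1:ℝ) ≤ x := by have := Nat.cast_nonneg (α := ℝ) m; linarith
  have hx0 : (0:ℝ) < x := by linarith
  have hfD : fD t (m + 1) = (x + 1) ^ (-(1/4) : ℝ) *
      Real.exp (2 * (x + 1) ^ ((3:ℝ)/2) - (x + 1) ^ 3 * t) := by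
    unfold fD; rw [hxdef]; push_cast; ring_nf
  have hfN : fN t m = x ^ (-(1/4) : ℝ) *
      Real.exp (2 * x ^ ((3:ℝ)/2) - (x + 1) ^ 3 * t) := by
    unfold fN; rw [hxdef]; push_cast; ring_nf
  rw [hfD, hfN]
  have h1 : x ^ (-(1/4) : ℝ) ≤ 2 * (x + 1) ^ (-(1/4) : ℝ) := inv4_aux x hx1
  have h2 : Real.exp (2 * x ^ ((3:ℝ)/2) - (x + 1) ^ 3 * t) ≤
      Real.exp (-2 * Real.sqrt x) * Real.exp (2 * (x + 1) ^ ((3:ℝ)/2) - (x + 1) ^ 3 * t) := by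
    rw [← Real.exp_add]
    apply Real.exp_le_exp.2
    have := sqrt_aux x hx1
    nlinarith
  calc x ^ (-(1/4) : ℝ) * Real.exp (2 * x ^ ((3:ℝ)/2) - (x + 1) ^ 3 * t)
      ≤ (2 * (x + 1) ^ (-(1/4) : ℝ)) *
        (Real.exp (-2 * Real.sqrt x) * Real.exp (2 * (x + 1) ^ ((3:ℝ)/2) - (x + 1) ^ 3 * t)) := by
        apply mul_le_mul h1 h2 (Real.exp_pos _).le (by positivity)
    _ = (2 * Real.exp (-2 * Real.sqrt x)) * ((x + 1) ^ (-(1/4) : ℝ) *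
        Real.exp (2 * (x + 1) ^ ((3:ℝ)/2) - (x + 1) ^ 3 * t)) := by ring

lemma fN_mono_t {s t : ℝ} (hst : s ≤ t) (m : ℕ) : fN t m ≤ fN s m := by
  unfold fN
  apply mul_le_mul_of_nonneg_left _ (by positivity)
  apply Real.exp_le_exp.2
  have h : ((m:ℝ) + 2) ^ 3 * s ≤ ((m:ℝ) + 2) ^ 3 * t := by
    apply mul_le_mul_of_nonneg_left hst (by positivity)
  linarith

lemma c_tendsto : Tendsto (fun m : ℕ => 2 * Real.exp (-2 * Real.sqrt ((m:ℝ) + 1)))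
    atTop (𝓝 0) := by
  have h1 : Tendsto (fun m : ℕ => ((m:ℝ) + 1)) atTop atTop :=
    tendsto_atTop_add_const_right _ 1 tendsto_natCast_atTop_atTop
  have h2 : Tendsto (fun m : ℕ => Real.sqrt ((m:ℝ) + 1)) atTop atTop := by
    have := (tendsto_rpow_atTop (by norm_num : (0:ℝ) < 1/2)).comp h1
    exact this.congr fun m => (Real.sqrt_eq_rpow _).symm
  have h3 : Tendsto (fun m : ℕ => -2 * Real.sqrt ((m:ℝ) + 1)) atTop atBot := by
    apply Tendsto.const_mul_atTop_of_neg (by norm_num) h2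
  have h4 : Tendsto (fun m : ℕ => Real.exp (-2 * Real.sqrt ((m:ℝ) + 1))) atTop (𝓝 0) :=
    Real.tendsto_exp_atBot.comp h3
  have := h4.const_mul 2
  simpa using this

/-- each single term at t = 0 is at least m+2 -/
lemma fD_zero_big (n : ℕ) : ((n:ℝ)) + 2 ≤ fD 0 n := by
  set x : ℝ := (n:ℝ) + 1 with hxdef
  have hx1 : (1:ℝ) ≤ x := by have := Nat.cast_nonneg (α := ℝ) n; linarith
  have hx0 : (0:ℝ) < x := by linarith
  have h1 : fD 0 n = x ^ (-(1/4) : ℝ) * Real.exp (2 * x ^ ((3:ℝ)/2)) := by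
    unfold fD; norm_num; rw [hxdef]
  have h2 : x⁻¹ ≤ x ^ (-(1/4) : ℝ) := by
    rw [show x⁻¹ = x ^ (-1 : ℝ) by rw [Real.rpow_neg_one]]
    exact Real.rpow_le_rpow_of_exponent_le hx1 (by norm_num)
  have h3 : x ≤ x ^ ((3:ℝ)/2) := by
    nth_rewrite 1 [← Real.rpow_one x]
    exact Real.rpow_le_rpow_of_exponent_le hx1 (by norm_num)
  have h4 : Real.exp (2 * x) ≤ Real.exp (2 * x ^ ((3:ℝ)/2)) :=
    Real.exp_le_exp.2 (by linarith)
  have h5 : x * (x + 1) ≤ Real.exp (2 * x) := by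
    have e1 : x + 1 ≤ Real.exp x := by
      have := Real.add_one_le_exp x; linarith
    have e2 : Real.exp (2 * x) = Real.exp x * Real.exp x := by
      rw [← Real.exp_add]; ring_nf
    have e3 : x ≤ Real.exp x := le_trans (by linarith) e1
    rw [e2]
    have : 0 ≤ Real.exp x := (Real.exp_pos x).le
    nlinarith
  have h6 : x + 1 ≤ x⁻¹ * Real.exp (2 * x) := by
    rw [le_inv_mul_iff₀ hx0]
    nlinarith
  have h7 : x⁻¹ * Real.exp (2 * x) ≤ x ^ (-(1/4) : ℝ) * Real.exp (2 * x ^ ((3:ℝ)/2)) := by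
    apply mul_le_mul h2 h4 (Real.exp_pos _).le (by positivity)
  rw [h1, hxdef] at *
  linarith

/-- The denominator tends to infinity eventually: -/
lemma fD_sum_big (C : ℝ) : ∀ᶠ t in 𝓝[>] (0:ℝ), C ≤ ∑' m, fD t m := by
  obtain ⟨n, hn⟩ := exists_nat_ge C
  have hcont : Tendsto (fun t : ℝ => fD t n) (𝓝 0) (𝓝 (fD 0 n)) := by
    apply Continuous.tendsto
    unfold fD
    fun_prop
  have hbig : C < fD 0 n := lt_of_le_of_lt (by linarith [fD_zero_big n]) (by linarith [fD_zero_big n])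
  have hev : ∀ᶠ t in 𝓝 (0:ℝ), C < fD t n := hcont.eventually (eventually_gt_nhds hbig)
  filter_upwards [nhdsWithin_le_nhds hev, self_mem_nhdsWithin] with t hts (htpos : 0 < t)
  have hsum := summable_fD htpos
  calc C ≤ fD t n := hts.le
    _ ≤ ∑' m, fD t m := hsum.le_tsum n (fun j _ => (fD_pos t j).le)

/-- As `t → 0⁺`, the quotient
`(∑_{m≥1} m^{-1/4} e^{2m^{3/2} - (m+1)³t}) / (∑_{m≥1} m^{-1/4} e^{2m^{3/2} - m³t})` tends to `0`. -/
theorem shifted_sum_quotient_tendsto_zero :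
    Tendsto (fun t : ℝ =>
        (∑' m : ℕ, ((m:ℝ) + 1) ^ (-(1/4) : ℝ) *
            Real.exp (2 * ((m:ℝ) + 1) ^ ((3:ℝ)/2) - ((m:ℝ) + 2) ^ 3 * t)) /
          (∑' m : ℕ, ((m:ℝ) + 1) ^ (-(1/4) : ℝ) *
            Real.exp (2 * ((m:ℝ) + 1) ^ ((3:ℝ)/2) - ((m:ℝ) + 1) ^ 3 * t)))
      (𝓝[>] (0:ℝ)) (𝓝 0) := by
  show Tendsto (fun t : ℝ => (∑' m, fN t m) / (∑' m, fD t m)) (𝓝[>] (0:ℝ)) (𝓝 0)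
  rw [Metric.tendsto_nhds]
  intro ε hε
  obtain ⟨M, hM⟩ := eventually_atTop.1
    (c_tendsto.eventually (eventually_lt_nhds (half_pos hε)))
  set K := ∑ m ∈ Finset.range M, fN 0 m with hKdef
  have hK0 : 0 ≤ K := Finset.sum_nonneg fun m _ => (fN_pos 0 m).le
  filter_upwards [fD_sum_big (2*(K+1)/ε), self_mem_nhdsWithin] with t hD (ht : 0 < t)
  set D := ∑' m, fD t m with hDdef
  have hDpos : 0 < D := lt_of_lt_of_le (by positivity) hD
  have hsplit := (summable_fN ht).sum_add_tsum_nat_add M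
  have hhead : ∑ m ∈ Finset.range M, fN t m ≤ K :=
    Finset.sum_le_sum fun m _ => fN_mono_t ht.le m
  have htail : ∑' m, fN t (m + M) ≤ ε/2 * D := by
    have hle : ∀ m, fN t (m + M) ≤ ε/2 * fD t (m + M + 1) := by
      intro m
      calc fN t (m+M) ≤ (2 * Real.exp (-2 * Real.sqrt (((m+M:ℕ):ℝ)+1))) * fD t (m+M+1) :=
            fN_key t (m+M)
        _ ≤ ε/2 * fD t (m+M+1) :=
            mul_le_mul_of_nonneg_right (hM (m+M) (Nat.le_add_left M m)).le (fD_pos _ _).le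
    have hsum1 : Summable (fun m => fN t (m + M)) :=
      (summable_nat_add_iff M).2 (summable_fN ht)
    have hsum2 : Summable (fun m => ε/2 * fD t (m + M + 1)) := by
      have : Summable (fun m => fD t (m + (M + 1))) :=
        (summable_nat_add_iff (M+1)).2 (summable_fD ht)
      exact (this.mul_left (ε/2)).congr fun m => by rw [add_assoc]
    calc ∑' m, fN t (m + M) ≤ ∑' m, ε/2 * fD t (m + M + 1) := hsum1.tsum_le_tsum hle hsum2
      _ = ε/2 * ∑' m, fD t (m + M + 1) := tsum_mul_left
      _ ≤ ε/2 * D := by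
          apply mul_le_mul_of_nonneg_left _ (half_pos hε).le
          have h2 : (∑ m ∈ Finset.range (M+1), fD t m) + ∑' m, fD t (m + (M+1)) = D :=
            (summable_fD ht).sum_add_tsum_nat_add (M+1)
          have hh : 0 ≤ ∑ m ∈ Finset.range (M+1), fD t m :=
            Finset.sum_nonneg fun m _ => (fD_pos t m).le
          have heq : ∑' m, fD t (m + M + 1) = ∑' m, fD t (m + (M+1)) := rfl
          rw [heq]; linarith
  have hN : ∑' m, fN t m ≤ K + ε/2 * D := by
    rw [← hsplit]; linarith
  have hKD : K + ε/2*D < ε * D := by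
    rw [div_le_iff₀ hε] at hD
    nlinarith
  have hNnonneg : 0 ≤ ∑' m, fN t m := tsum_nonneg fun m => (fN_pos t m).le
  rw [Real.dist_eq, sub_zero, abs_of_nonneg (div_nonneg hNnonneg hDpos.le),
    div_lt_iff₀ hDpos]
  calc ∑' m, fN t m ≤ K + ε/2 * D := hN
    _ < ε * D := hKD
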